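/- Let ρ be any probability measure on the space of sequences [β_min, β_max]^ℕ and let ℙ = ρ × λ be the product of ρ with Lebesgue measure λ on [0,1]. For every m ≥ 1 and every word c = (c_1,…,c_m) ∈ {0,1}^m, the (outer) measure under ℙ of the set {(β, x) : b_i(β, x) = c_i for i = 1,…,m} is at most κ β_min^{−m}. In particular, if ℙ_m denotes the induced distribution of (b_1,…,b_m) on {0,1}^m, its min-entropy satisfies H_∞(ℙ_m) = −log₂ max_{c ∈ {0,1}^m} ℙ_m(c) ≥ m·log₂ β_min − log₂ κ. -/

import Mathlib

open MeasureTheory Filter Set Real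

/-- Orbit of the random-amplification β-encoder: `rIter βs u x n` is the iterate `x_n`,
where `x_0 = x` and `x_n = βs_n · x_{n-1} − b_n`. -/
noncomputable def rIter (βs u : ℕ → ℝ) (x : ℝ) : ℕ → ℝ
  | 0 => x
  | n + 1 =>
      if βs (n + 1) * rIter βs u x n < u (n + 1) then βs (n + 1) * rIter βs u x n
      else βs (n + 1) * rIter βs u x n - 1

/-- The bit `b_n` produced by the random-amplification β-encoder at step `n ≥ 1`. -/
noncomputable def rBit (βs u : ℕ → ℝ) (x : ℝ) (n : ℕ) : ℝ :=
  if βs n * rIter βs u x (n - 1) < u n then 0 else 1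

/-- The event that the first `m` bits of the random-amplification β-encoder, run with
amplification sequence `p.1` and input `p.2`, equal the word `c`. -/
def rEvent (u : ℕ → ℝ) (m : ℕ) (c : ℕ → ℝ) : Set ((ℕ → ℝ) × ℝ) :=
  {p : (ℕ → ℝ) × ℝ | ∀ i ∈ Finset.Icc 1 m, rBit p.1 u p.2 i = c i}

lemma rIter_succ_eq (βs u : ℕ → ℝ) (x : ℝ) (n : ℕ) :
    rIter βs u x (n + 1) = βs (n + 1) * rIter βs u x n - rBit βs u x (n + 1) := by
  by_cases h : βs (n + 1) * rIter βs u x n < u (n + 1) <;>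
    simp [rIter, rBit, h]

lemma meas_rIter (u : ℕ → ℝ) (n : ℕ) :
    Measurable fun p : (ℕ → ℝ) × ℝ => rIter p.1 u p.2 n := by
  induction n with
  | zero => exact measurable_snd
  | succ n ih =>
      have hf : Measurable fun p : (ℕ → ℝ) × ℝ => p.1 (n + 1) * rIter p.1 u p.2 n :=
        ((measurable_pi_apply (n + 1)).comp measurable_fst).mul ih
      have hs : MeasurableSet {p : (ℕ → ℝ) × ℝ | p.1 (n + 1) * rIter p.1 u p.2 n < u (n + 1)} :=
        measurableSet_lt hf measurable_const
      simpa [rIter] using Measurable.ite hs hf (hf.sub measurable_const)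

lemma meas_rBit (u : ℕ → ℝ) (n : ℕ) :
    Measurable fun p : (ℕ → ℝ) × ℝ => rBit p.1 u p.2 n := by
  have hf : Measurable fun p : (ℕ → ℝ) × ℝ => p.1 n * rIter p.1 u p.2 (n - 1) :=
    ((measurable_pi_apply n).comp measurable_fst).mul (meas_rIter u (n - 1))
  have hs : MeasurableSet {p : (ℕ → ℝ) × ℝ | p.1 n * rIter p.1 u p.2 (n - 1) < u n} :=
    measurableSet_lt hf measurable_const
  simpa [rBit] using Measurable.ite hs measurable_const measurable_const

lemma meas_rEvent (u : ℕ → ℝ) (m : ℕ) (c : ℕ → ℝ) : MeasurableSet (rEvent u m c) := by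
  have : rEvent u m c = ⋂ i ∈ Finset.Icc 1 m,
      {p : (ℕ → ℝ) × ℝ | rBit p.1 u p.2 i = c i} := by
    ext p; simp [rEvent]
  rw [this]
  exact MeasurableSet.biInter (Finset.Icc 1 m).countable_toSet fun i _ =>
    measurableSet_eq_fun (meas_rBit u i) measurable_const

lemma rIter_mem (βmin βmax : ℝ) (h1 : 1 < βmin) (h2 : βmin ≤ βmax) (h3 : βmax < 2)
    (u b : ℕ → ℝ) (hu : ∀ n, 1 ≤ n → u n ∈ Set.Icc (1:ℝ) (βmax - 1)⁻¹)
    (hb : ∀ n, 1 ≤ n → b n ∈ Set.Icc βmin βmax)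
    (x : ℝ) (hx : x ∈ Set.Icc (0:ℝ) 1) (n : ℕ) :
    rIter b u x n ∈ Set.Icc (0:ℝ) (βmax - 1)⁻¹ := by
  have hβ1 : (0:ℝ) < βmax - 1 := by linarith
  have hκ1 : (1:ℝ) ≤ (βmax - 1)⁻¹ := by
    rw [le_inv_comm₀ one_pos hβ1]; simp; linarith
  induction n with
  | zero =>
      exact ⟨hx.1, hx.2.trans hκ1⟩
  | succ n ih =>
      have hbn := hb (n + 1) (Nat.le_add_left 1 n)
      have hun := hu (n + 1) (Nat.le_add_left 1 n)
      have hb0 : (0:ℝ) ≤ b (n + 1) := by linarith [hbn.1]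
      have hprod0 : 0 ≤ b (n + 1) * rIter b u x n := mul_nonneg hb0 ih.1
      have hprodκ : b (n + 1) * rIter b u x n ≤ βmax * (βmax - 1)⁻¹ :=
        mul_le_mul hbn.2 ih.2 ih.1 (by linarith)
      have hkey : βmax * (βmax - 1)⁻¹ = 1 + (βmax - 1)⁻¹ := by
        field_simp
        ring
      by_cases h : b (n + 1) * rIter b u x n < u (n + 1)
      · simp only [rIter, h, if_true]
        exact ⟨hprod0, le_of_lt (h.trans_le hun.2)⟩
      · simp only [rIter, h, if_false]
        constructor
        · push_neg at h; linarith [hun.1]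
        · linarith [hprodκ, hkey.le]

lemma rIter_formula (u b : ℕ → ℝ) (x : ℝ) (m : ℕ) (c : ℕ → ℝ)
    (h : ∀ i ∈ Finset.Icc 1 m, rBit b u x i = c i) :
    ∀ n, n ≤ m → rIter b u x n =
      (∏ i ∈ Finset.Icc 1 n, b i) * x -
        ∑ i ∈ Finset.Icc 1 n, c i * ∏ j ∈ Finset.Icc (i + 1) n, b j := by
  intro n
  induction n with
  | zero => simp [rIter]
  | succ n ih =>
      intro hnm
      have ih' := ih (le_of_lt (Nat.lt_of_succ_le hnm))
      have hbit : rBit b u x (n + 1) = c (n + 1) :=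
        h (n + 1) (Finset.mem_Icc.2 ⟨Nat.le_add_left 1 n, hnm⟩)
      rw [rIter_succ_eq, hbit, ih']
      rw [Finset.prod_Icc_succ_top (Nat.le_add_left 1 n)]
      have hsum : ∑ i ∈ Finset.Icc 1 (n + 1), c i * ∏ j ∈ Finset.Icc (i + 1) (n + 1), b j
          = c (n + 1) + (∑ i ∈ Finset.Icc 1 n, c i * ∏ j ∈ Finset.Icc (i + 1) n, b j) * b (n + 1) := by
        rw [Finset.sum_Icc_succ_top (Nat.le_add_left 1 n)]
        rw [Finset.Icc_eq_empty (by omega : ¬ n + 1 + 1 ≤ n + 1)]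
        simp only [Finset.prod_empty, mul_one]
        rw [Finset.sum_mul]
        rw [add_comm]
        congr 1
        refine Finset.sum_congr rfl fun i hi => ?_
        have hi' : i ≤ n := (Finset.mem_Icc.1 hi).2
        rw [Finset.prod_Icc_succ_top (by omega : i + 1 ≤ n + 1), mul_assoc]
      rw [hsum]; ring

lemma section_bound (βmin βmax : ℝ) (h1 : 1 < βmin) (h2 : βmin ≤ βmax) (h3 : βmax < 2)
    (u b : ℕ → ℝ) (hu : ∀ n, 1 ≤ n → u n ∈ Set.Icc (1:ℝ) (βmax - 1)⁻¹)
    (hb : ∀ n, 1 ≤ n → b n ∈ Set.Icc βmin βmax) (m : ℕ) (c : ℕ → ℝ) :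
    (volume.restrict (Set.Icc (0:ℝ) 1))
        {x : ℝ | ∀ i ∈ Finset.Icc 1 m, rBit b u x i = c i}
      ≤ ENNReal.ofReal ((βmax - 1)⁻¹ / βmin ^ m) := by
  have hβ1 : (0:ℝ) < βmax - 1 := by linarith
  have hκ0 : (0:ℝ) < (βmax - 1)⁻¹ := inv_pos.2 hβ1
  set P := ∏ i ∈ Finset.Icc 1 m, b i with hP
  set S := ∑ i ∈ Finset.Icc 1 m, c i * ∏ j ∈ Finset.Icc (i + 1) m, b j with hS
  have hPm : βmin ^ m ≤ P := by
    rw [hP]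
    calc βmin ^ m = ∏ _i ∈ Finset.Icc 1 m, βmin := by
          rw [Finset.prod_const, Nat.card_Icc]; simp
      _ ≤ ∏ i ∈ Finset.Icc 1 m, b i :=
          Finset.prod_le_prod (fun i _ => by linarith)
            (fun i hi => (hb i (Finset.mem_Icc.1 hi).1).1)
  have hP0 : (0:ℝ) < P := lt_of_lt_of_le (pow_pos (by linarith) m) hPm
  have hsub : {x : ℝ | ∀ i ∈ Finset.Icc 1 m, rBit b u x i = c i} ∩ Set.Icc (0:ℝ) 1
      ⊆ Set.Icc (S / P) ((S + (βmax - 1)⁻¹) / P) := by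
    rintro x ⟨hxev, hx⟩
    have hform := rIter_formula u b x m c hxev m le_rfl
    have hmem := rIter_mem βmin βmax h1 h2 h3 u b hu hb x hx m
    rw [hform] at hmem
    obtain ⟨hl, hr⟩ := hmem
    constructor
    · rw [div_le_iff₀ hP0]; linarith
    · rw [le_div_iff₀ hP0]; linarith
  calc (volume.restrict (Set.Icc (0:ℝ) 1))
        {x : ℝ | ∀ i ∈ Finset.Icc 1 m, rBit b u x i = c i}
      = volume ({x : ℝ | ∀ i ∈ Finset.Icc 1 m, rBit b u x i = c i} ∩ Set.Icc (0:ℝ) 1) :=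
        Measure.restrict_apply' measurableSet_Icc
    _ ≤ volume (Set.Icc (S / P) ((S + (βmax - 1)⁻¹) / P)) := measure_mono hsub
    _ = ENNReal.ofReal ((S + (βmax - 1)⁻¹) / P - S / P) := by rw [Real.volume_Icc]
    _ = ENNReal.ofReal ((βmax - 1)⁻¹ / P) := by rw [div_sub_div_same]; ring_nf
    _ ≤ ENNReal.ofReal ((βmax - 1)⁻¹ / βmin ^ m) := by
        apply ENNReal.ofReal_le_ofReal
        exact div_le_div_of_nonneg_left hκ0.le (pow_pos (by linarith) m) hPm

/-- for `ℙ = ρ × λ` with `ρ` any probability measure on the sequence space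
(supported on sequences with values in `[β_min, β_max]`) and `λ` Lebesgue measure on `[0,1]`,
for every `m ≥ 1` and every word `c ∈ {0,1}^m` one has
`ℙ(b_1 = c_1, …, b_m = c_m) ≤ κ β_min^{−m}`; in particular the min-entropy of the
distribution `ℙ_m` of `(b_1,…,b_m)` satisfies `H_∞(ℙ_m) ≥ m·log₂ β_min − log₂ κ`. -/
theorem stmt_15 (βmin βmax : ℝ) (h1 : 1 < βmin) (h2 : βmin ≤ βmax) (h3 : βmax < 2)
    (u : ℕ → ℝ) (hu : ∀ n, 1 ≤ n → u n ∈ Set.Icc (1:ℝ) (βmax - 1)⁻¹)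
    (ρ : Measure (ℕ → ℝ)) [IsProbabilityMeasure ρ]
    (hρ : ∀ᵐ b ∂ρ, ∀ n, 1 ≤ n → b n ∈ Set.Icc βmin βmax)
    (m : ℕ) (hm : 1 ≤ m) (c : ℕ → ℝ) (hc : ∀ i, c i = 0 ∨ c i = 1) :
    (ρ.prod (volume.restrict (Set.Icc (0:ℝ) 1))) (rEvent u m c)
        ≤ ENNReal.ofReal ((βmax - 1)⁻¹ / βmin ^ m) ∧
    ((ρ.prod (volume.restrict (Set.Icc (0:ℝ) 1))) (rEvent u m c) ≠ 0 →
      (m : ℝ) * Real.logb 2 βmin - Real.logb 2 (βmax - 1)⁻¹ ≤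
        -Real.logb 2 (((ρ.prod (volume.restrict (Set.Icc (0:ℝ) 1))) (rEvent u m c)).toReal)) := by
  have hβ1 : (0:ℝ) < βmax - 1 := by linarith
  have hκ0 : (0:ℝ) < (βmax - 1)⁻¹ := inv_pos.2 hβ1
  have hpow0 : (0:ℝ) < βmin ^ m := pow_pos (by linarith) m
  have hC0 : (0:ℝ) < (βmax - 1)⁻¹ / βmin ^ m := div_pos hκ0 hpow0
  have hmain : (ρ.prod (volume.restrict (Set.Icc (0:ℝ) 1))) (rEvent u m c)
      ≤ ENNReal.ofReal ((βmax - 1)⁻¹ / βmin ^ m) := by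
    rw [Measure.prod_apply (meas_rEvent u m c)]
    calc ∫⁻ b, (volume.restrict (Set.Icc (0:ℝ) 1)) (Prod.mk b ⁻¹' rEvent u m c) ∂ρ
        ≤ ∫⁻ _, ENNReal.ofReal ((βmax - 1)⁻¹ / βmin ^ m) ∂ρ := by
          apply lintegral_mono_ae
          filter_upwards [hρ] with b hb
          have : Prod.mk b ⁻¹' rEvent u m c
              = {x : ℝ | ∀ i ∈ Finset.Icc 1 m, rBit b u x i = c i} := rfl
          rw [this]
          exact section_bound βmin βmax h1 h2 h3 u b hu hb m c
      _ = ENNReal.ofReal ((βmax - 1)⁻¹ / βmin ^ m) := by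
          rw [lintegral_const, measure_univ, mul_one]
  refine ⟨hmain, fun hne => ?_⟩
  set E := (ρ.prod (volume.restrict (Set.Icc (0:ℝ) 1))) (rEvent u m c) with hE
  have hfin : E ≠ ⊤ := ne_top_of_le_ne_top ENNReal.ofReal_ne_top hmain
  have hle : E.toReal ≤ (βmax - 1)⁻¹ / βmin ^ m :=
    ENNReal.toReal_le_of_le_ofReal hC0.le hmain
  have hpos : 0 < E.toReal := ENNReal.toReal_pos hne hfin
  have hlog : Real.logb 2 E.toReal ≤ Real.logb 2 ((βmax - 1)⁻¹ / βmin ^ m) :=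
    Real.logb_le_logb_of_le (by norm_num) hpos hle
  have hlogC : Real.logb 2 ((βmax - 1)⁻¹ / βmin ^ m)
      = Real.logb 2 (βmax - 1)⁻¹ - (m : ℝ) * Real.logb 2 βmin := by
    rw [Real.logb_div (ne_of_gt hκ0) (ne_of_gt hpow0), Real.logb_pow]
  linarith
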